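/- Let μ₀ be a finite measure on a compact metric space X, γ > 0, and μ a probability measure on X. Then (1/γ)·D(μ‖μ₀') = sup over continuous functions u of ( −(1/γ)·log ∫ e^{-γu} dμ₀ − ∫ u dμ ), where D(μ‖μ₀') is the relative entropy of μ with respect to μ₀ (equal to ∫ log(dμ/dμ₀) dμ if μ ≪ μ₀ and +∞ otherwise), interpreted appropriately. -/

import Mathlib

open MeasureTheory Real Filter

/-- Clamping to an interval `[a,b]` does not increase the distance to a point of `[a,b]`. -/
private lemma clamp_abs_sub_le {a b s t : ℝ} (h1 : a ≤ t) (h2 : t ≤ b) :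
    |max a (min b s) - t| ≤ |s - t| := by
  have h3 := neg_abs_le (s - t)
  have h4 := le_abs_self (s - t)
  have h5 := abs_nonneg (s - t)
  rw [abs_le]
  constructor
  · have hlow : -|s - t| ≤ min b s - t := by
      rcases le_total s b with hs | hs
      · rw [min_eq_right hs]; linarith
      · rw [min_eq_left hs]; linarith
    have := le_max_right a (min b s)
    linarith
  · rcases le_total a (min b s) with ha | ha
    · rw [max_eq_right ha]
      have := min_le_right b s
      linarith
    · rw [max_eq_left ha]
      linarith

private lemma abs_exp_sub_exp_le {M a b : ℝ} (ha : a ≤ M) (hb : b ≤ M) :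
    |Real.exp a - Real.exp b| ≤ Real.exp M * |a - b| := by
  wlog hab : b ≤ a generalizing a b
  · rw [abs_sub_comm, abs_sub_comm a b]; exact this hb ha (le_of_not_ge hab)
  have h1 : Real.exp b ≤ Real.exp a := Real.exp_le_exp.2 hab
  have h2 : Real.exp a ≤ Real.exp M := Real.exp_le_exp.2 ha
  rw [abs_of_nonneg (by linarith), abs_of_nonneg (by linarith)]
  have h3 : (b - a) + 1 ≤ Real.exp (b - a) := Real.add_one_le_exp _
  have h4 : Real.exp (b - a) * Real.exp a = Real.exp b := by
    rw [← Real.exp_add]; ring_nf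
  nlinarith [Real.exp_pos a]

private lemma le_integral_exp {X : Type*} [MeasurableSpace X] {μ₀ : Measure X}
    [IsFiniteMeasure μ₀] {w : X → ℝ} (hw : Integrable (fun x => Real.exp (w x)) μ₀)
    {M : ℝ} (hM : ∀ x, -M ≤ w x) :
    Real.exp (-M) * (μ₀ Set.univ).toReal ≤ ∫ x, Real.exp (w x) ∂μ₀ := by
  have h := integral_mono (integrable_const (Real.exp (-M))) hw
    (fun x => Real.exp_le_exp.2 (hM x))
  rwa [integral_const, smul_eq_mul, mul_comm] at h

/-- Gibbs' inequality: for any bounded measurable `h`,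
`∫ h dμ - log ∫ e^h dμ₀ ≤ ∫ log (dμ/dμ₀) dμ`. -/
private lemma gibbs_le {X : Type*} [MeasurableSpace X]
    (μ₀ μ : Measure X) [IsFiniteMeasure μ₀] [IsProbabilityMeasure μ]
    (hac : μ ≪ μ₀)
    (hint : Integrable (fun x => Real.log (μ.rnDeriv μ₀ x).toReal) μ)
    {h : X → ℝ} (hmeas : Measurable h) {M : ℝ} (hM : ∀ x, |h x| ≤ M) :
    ∫ x, h x ∂μ - Real.log (∫ x, Real.exp (h x) ∂μ₀)
      ≤ ∫ x, Real.log (μ.rnDeriv μ₀ x).toReal ∂μ := by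
  set f : X → ℝ := fun x => (μ.rnDeriv μ₀ x).toReal with hf_def
  have hf_meas : Measurable f := (Measure.measurable_rnDeriv μ μ₀).ennreal_toReal
  have hf_nonneg : ∀ x, 0 ≤ f x := fun x => ENNReal.toReal_nonneg
  have hf_pos : ∀ᵐ x ∂μ, 0 < f x := by
    filter_upwards [Measure.rnDeriv_pos hac, hac.ae_le (Measure.rnDeriv_lt_top μ μ₀)]
      with x h1 h2
    exact ENNReal.toReal_pos h1.ne' h2.ne
  have hμ₀ne : μ₀ ≠ 0 := by
    intro h0
    rw [h0] at hac
    have h1 : μ Set.univ = 0 := hac (by simp)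
    simp [measure_univ] at h1
  have hexph_int : Integrable (fun x => Real.exp (h x)) μ₀ := by
    refine Integrable.mono' (integrable_const (Real.exp M))
      (Real.measurable_exp.comp hmeas).aestronglyMeasurable ?_
    filter_upwards with x
    rw [Real.norm_eq_abs, abs_of_nonneg (Real.exp_pos _).le]
    exact Real.exp_le_exp.2 (abs_le.1 (hM x)).2
  set Z : ℝ := ∫ x, Real.exp (h x) ∂μ₀ with hZ_def
  have hμ₀pos : 0 < (μ₀ Set.univ).toReal := by
    refine ENNReal.toReal_pos ?_ (measure_ne_top _ _)
    simpa [Measure.measure_univ_eq_zero] using hμ₀ne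
  have hZ_pos : 0 < Z := by
    have hlb := le_integral_exp hexph_int (fun x => (abs_le.1 (hM x)).1)
    have : 0 < Real.exp (-M) * (μ₀ Set.univ).toReal := by positivity
    linarith
  set G : X → ℝ := fun x => Real.exp (h x) * (f x)⁻¹ with hG_def
  have hG_meas : Measurable G := (Real.measurable_exp.comp hmeas).mul hf_meas.inv
  have hfG_le : ∀ x, f x * G x ≤ Real.exp (h x) := by
    intro x
    rcases eq_or_ne (f x) 0 with h0 | h0
    · simp [hG_def, h0, (Real.exp_pos (h x)).le]
    · have : f x * G x = Real.exp (h x) := by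
        show f x * (Real.exp (h x) * (f x)⁻¹) = Real.exp (h x); field_simp
      rw [this]
  have hfG_nonneg : ∀ x, 0 ≤ f x * G x := by
    intro x
    have : 0 ≤ G x := mul_nonneg (Real.exp_pos _).le (inv_nonneg.2 (hf_nonneg x))
    exact mul_nonneg (hf_nonneg x) this
  have hfG_int : Integrable (fun x => f x • G x) μ₀ := by
    refine Integrable.mono' hexph_int (hf_meas.mul hG_meas).aestronglyMeasurable ?_
    filter_upwards with x
    rw [smul_eq_mul, Real.norm_eq_abs, abs_of_nonneg (hfG_nonneg x)]
    exact hfG_le x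
  have hG_int : Integrable G μ := (integrable_rnDeriv_smul_iff hac).1 hfG_int
  have hG_integral_le : ∫ x, G x ∂μ ≤ Z := by
    have h1 : ∫ x, f x • G x ∂μ₀ = ∫ x, G x ∂μ := integral_rnDeriv_smul hac
    rw [← h1]
    refine integral_mono hfG_int hexph_int (fun x => ?_)
    rw [smul_eq_mul]
    exact hfG_le x
  have h_int_mu : Integrable h μ := by
    refine Integrable.mono' (integrable_const M) hmeas.aestronglyMeasurable ?_
    filter_upwards with x
    rw [Real.norm_eq_abs]; exact hM x
  have hpt : ∀ᵐ x ∂μ, h x - Real.log (f x) - Real.log Z ≤ G x / Z - 1 := by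
    filter_upwards [hf_pos] with x hx
    have hGx_pos : 0 < G x := mul_pos (Real.exp_pos _) (inv_pos.2 hx)
    have hdiv_pos : 0 < G x / Z := div_pos hGx_pos hZ_pos
    have hlog := Real.log_le_sub_one_of_pos hdiv_pos
    rw [Real.log_div hGx_pos.ne' hZ_pos.ne',
      Real.log_mul (Real.exp_pos _).ne' (inv_ne_zero hx.ne'), Real.log_exp,
      Real.log_inv] at hlog
    linarith
  have lhs_int : Integrable (fun x => h x - Real.log (f x) - Real.log Z) μ :=
    (h_int_mu.sub hint).sub (integrable_const _)
  have rhs_int : Integrable (fun x => G x / Z - 1) μ :=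
    (hG_int.div_const Z).sub (integrable_const 1)
  have key := integral_mono_ae lhs_int rhs_int hpt
  have int1 : Integrable (fun x => h x - Real.log (f x)) μ := h_int_mu.sub hint
  have int2 : Integrable (fun x => G x / Z) μ := hG_int.div_const Z
  rw [integral_sub int1 (integrable_const _),
    integral_sub h_int_mu hint, integral_sub int2 (integrable_const 1),
    integral_const, integral_const, probReal_univ, one_smul,
    one_smul, integral_div] at key
  have hZZ : (∫ x, G x ∂μ) / Z ≤ 1 := by
    rw [div_le_one hZ_pos]; exact hG_integral_le
  linarith

/-- Approximation half: the supremum over continuous functions reaches the entropy. -/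
private lemma gibbs_sup {X : Type*} [MetricSpace X] [CompactSpace X] [MeasurableSpace X]
    [BorelSpace X]
    (μ₀ μ : Measure X) [IsFiniteMeasure μ₀] [IsProbabilityMeasure μ]
    (hac : μ ≪ μ₀)
    (hint : Integrable (fun x => Real.log (μ.rnDeriv μ₀ x).toReal) μ)
    {δ : ℝ} (hδ : 0 < δ) :
    ∃ u : C(X, ℝ), ∫ x, Real.log (μ.rnDeriv μ₀ x).toReal ∂μ - δ
      ≤ ∫ x, u x ∂μ - Real.log (∫ x, Real.exp (u x) ∂μ₀) := by
  set f : X → ℝ := fun x => (μ.rnDeriv μ₀ x).toReal with hf_def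
  have hf_meas : Measurable f := (Measure.measurable_rnDeriv μ μ₀).ennreal_toReal
  have hf_nonneg : ∀ x, 0 ≤ f x := fun x => ENNReal.toReal_nonneg
  have hf_pos : ∀ᵐ x ∂μ, 0 < f x := by
    filter_upwards [Measure.rnDeriv_pos hac, hac.ae_le (Measure.rnDeriv_lt_top μ μ₀)]
      with x h1 h2
    exact ENNReal.toReal_pos h1.ne' h2.ne
  have hμ₀ne : μ₀ ≠ 0 := by
    intro h0
    rw [h0] at hac
    have h1 : μ Set.univ = 0 := hac (by simp)
    simp [measure_univ] at h1
  have hμ₀pos : 0 < (μ₀ Set.univ).toReal := by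
    refine ENNReal.toReal_pos ?_ (measure_ne_top _ _)
    simpa [Measure.measure_univ_eq_zero] using hμ₀ne
  set m : ℝ := (μ₀ Set.univ).toReal with hm_def
  set D : ℝ := ∫ x, Real.log (f x) ∂μ with hD_def
  -- truncations of log f
  set H : ℕ → X → ℝ :=
    fun n x => max (-(n : ℝ)) (min (n : ℝ) (Real.log (max (f x) (Real.exp (-(n : ℝ))))))
    with hH_def
  have Hmeas : ∀ n, Measurable (H n) := by
    intro n
    have h1 : Measurable fun x => Real.log (max (f x) (Real.exp (-(n : ℝ)))) :=
      Real.measurable_log.comp (hf_meas.max measurable_const)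
    exact measurable_const.max (measurable_const.min h1)
  have Habs : ∀ n x, |H n x| ≤ (n : ℝ) := by
    intro n x
    have hn : (0 : ℝ) ≤ (n : ℝ) := Nat.cast_nonneg n
    rw [abs_le]
    exact ⟨le_max_left _ _, max_le (by linarith) (min_le_left _ _)⟩
  have H_le : ∀ n x, H n x ≤ Real.log (max (f x) (Real.exp (-(n : ℝ)))) := by
    intro n x
    have hL : -(n : ℝ) ≤ Real.log (max (f x) (Real.exp (-(n : ℝ)))) := by
      have := Real.log_le_log (Real.exp_pos (-(n : ℝ))) (le_max_right (f x) _)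
      rwa [Real.log_exp] at this
    exact max_le hL (min_le_right _ _)
  have exp_H_le : ∀ n x, Real.exp (H n x) ≤ f x + Real.exp (-(n : ℝ)) := by
    intro n x
    have h1 : Real.exp (H n x) ≤ max (f x) (Real.exp (-(n : ℝ))) := by
      have := Real.exp_le_exp.2 (H_le n x)
      rwa [Real.exp_log (lt_of_lt_of_le (Real.exp_pos _) (le_max_right _ _))] at this
    refine h1.trans (max_le ?_ ?_)
    · exact le_add_of_nonneg_right (Real.exp_pos _).le
    · exact le_add_of_nonneg_left (hf_nonneg x)
  have H_int : ∀ n, Integrable (H n) μ := by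
    intro n
    refine Integrable.mono' (integrable_const (n : ℝ)) (Hmeas n).aestronglyMeasurable ?_
    filter_upwards with x
    rw [Real.norm_eq_abs]; exact Habs n x
  have expH_int : ∀ n, Integrable (fun x => Real.exp (H n x)) μ₀ := by
    intro n
    refine Integrable.mono' (integrable_const (Real.exp (n : ℝ)))
      (Real.measurable_exp.comp (Hmeas n)).aestronglyMeasurable ?_
    filter_upwards with x
    rw [Real.norm_eq_abs, abs_of_nonneg (Real.exp_pos _).le]
    exact Real.exp_le_exp.2 (abs_le.1 (Habs n x)).2
  have hf_int : Integrable f μ₀ := Measure.integrable_toReal_rnDeriv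
  have hf_integral : ∫ x, f x ∂μ₀ = 1 := by
    rw [Measure.integral_toReal_rnDeriv hac, probReal_univ]
  have Zn_le : ∀ n, ∫ x, Real.exp (H n x) ∂μ₀ ≤ 1 + Real.exp (-(n : ℝ)) * m := by
    intro n
    have h1 : ∫ x, Real.exp (H n x) ∂μ₀ ≤ ∫ x, (f x + Real.exp (-(n : ℝ))) ∂μ₀ :=
      integral_mono (expH_int n) (hf_int.add (integrable_const _)) (exp_H_le n)
    rwa [integral_add hf_int (integrable_const _), hf_integral, integral_const,
      smul_eq_mul, mul_comm] at h1
  -- a.e. domination and convergence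
  have Hdom : ∀ n, ∀ᵐ x ∂μ, ‖H n x‖ ≤ |Real.log (f x)| := by
    intro n
    filter_upwards [hf_pos] with x hx
    rw [Real.norm_eq_abs]
    rcases le_total (Real.exp (-(n : ℝ))) (f x) with hc | hc
    · have hmax : max (f x) (Real.exp (-(n : ℝ))) = f x := max_eq_left hc
      have hcl := clamp_abs_sub_le (a := -(n : ℝ)) (b := (n : ℝ))
        (s := Real.log (f x)) (t := 0)
        (by simpa using (Nat.cast_nonneg n : (0:ℝ) ≤ n)) (Nat.cast_nonneg n)
      simp only [sub_zero] at hcl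
      calc |H n x| = |max (-(n : ℝ)) (min (n : ℝ) (Real.log (f x)))| := by
            rw [hH_def]; simp [hmax]
        _ ≤ |Real.log (f x)| := hcl
    · have hmax : max (f x) (Real.exp (-(n : ℝ))) = Real.exp (-(n : ℝ)) := max_eq_right hc
      have hlogle : Real.log (f x) ≤ -(n : ℝ) := by
        have := Real.log_le_log hx hc
        rwa [Real.log_exp] at this
      have hn : (0 : ℝ) ≤ (n : ℝ) := Nat.cast_nonneg n
      have hHval : H n x = -(n : ℝ) := by
        rw [hH_def]
        simp only [hmax, Real.log_exp]
        rw [min_eq_right (by linarith), max_self]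
      rw [hHval, abs_neg, abs_of_nonneg hn]
      calc (n : ℝ) ≤ -Real.log (f x) := by linarith
        _ ≤ |Real.log (f x)| := neg_le_abs _
  have Hconv : ∀ᵐ x ∂μ, Tendsto (fun n => H n x) atTop (nhds (Real.log (f x))) := by
    filter_upwards [hf_pos] with x hx
    refine tendsto_atTop_of_eventually_const (i₀ := ⌈|Real.log (f x)|⌉₊) ?_
    intro n hn
    have hnabs : |Real.log (f x)| ≤ (n : ℝ) :=
      (Nat.le_ceil _).trans (Nat.cast_le.2 hn)
    have h1 : Real.exp (-(n : ℝ)) ≤ f x := by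
      rw [← Real.exp_log hx]
      exact Real.exp_le_exp.2 (by rw [abs_le] at hnabs; linarith [hnabs.1])
    rw [hH_def]
    simp only [max_eq_left h1]
    rw [min_eq_right (abs_le.1 hnabs).2, max_eq_right (abs_le.1 hnabs).1]
  have htend : Tendsto (fun n => ∫ x, H n x ∂μ) atTop (nhds D) :=
    tendsto_integral_of_dominated_convergence _
      (fun n => (Hmeas n).aestronglyMeasurable) hint.abs Hdom Hconv
  have ev1 : ∀ᶠ n : ℕ in atTop, D - δ / 4 < ∫ x, H n x ∂μ :=
    htend.eventually (eventually_gt_nhds (by linarith))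
  have ev2 : ∀ᶠ n : ℕ in atTop, Real.exp (-(n : ℝ)) * m ≤ δ / 4 := by
    have h0 : Tendsto (fun n : ℕ => Real.exp (-(n : ℝ)) * m) atTop (nhds (0 * m)) :=
      ((Real.tendsto_exp_neg_atTop_nhds_zero).comp tendsto_natCast_atTop_atTop).mul_const m
    rw [zero_mul] at h0
    exact h0.eventually (eventually_le_nhds (by linarith))
  obtain ⟨n, hn1, hn2⟩ := (ev1.and ev2).exists
  set h : X → ℝ := H n with hh_def
  set A : ℝ := ∫ x, Real.exp (h x) ∂μ₀ with hA_def
  have hA_lb : Real.exp (-(n : ℝ)) * m ≤ A :=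
    le_integral_exp (expH_int n) (fun x => (abs_le.1 (Habs n x)).1)
  have hA_pos : 0 < A := lt_of_lt_of_le (by positivity) hA_lb
  have hlogA : Real.log A ≤ δ / 4 := by
    have h1 : Real.log A ≤ Real.log (1 + Real.exp (-(n : ℝ)) * m) :=
      Real.log_le_log hA_pos (Zn_le n)
    have h2 : Real.log (1 + Real.exp (-(n : ℝ)) * m) ≤ Real.exp (-(n : ℝ)) * m := by
      have := Real.log_le_sub_one_of_pos
        (show (0:ℝ) < 1 + Real.exp (-(n : ℝ)) * m by positivity)
      linarith
    linarith
  -- approximate h by a continuous function in L¹(μ₀ + μ)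
  set ν : Measure X := μ₀ + μ with hν_def
  have h_int_ν : Integrable h ν := by
    refine Integrable.mono' (integrable_const (n : ℝ)) (Hmeas n).aestronglyMeasurable ?_
    filter_upwards with x
    rw [Real.norm_eq_abs]; exact Habs n x
  set ε' : ℝ := min (δ / 4) (δ / 4 * Real.exp (-(2 : ℝ) * n) * m) with hε'_def
  have hε'_pos : 0 < ε' := lt_min (by linarith) (by positivity)
  obtain ⟨g, hg_approx, hg_int⟩ := h_int_ν.exists_boundedContinuous_integral_sub_le hε'_pos
  set u : C(X, ℝ) :=
    ⟨fun x => max (-(n : ℝ)) (min (n : ℝ) (g x)),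
      continuous_const.max (continuous_const.min g.continuous)⟩ with hu_def
  have hu_abs : ∀ x, |u x| ≤ (n : ℝ) := by
    intro x
    have hn : (0 : ℝ) ≤ (n : ℝ) := Nat.cast_nonneg n
    rw [abs_le]
    exact ⟨le_max_left _ _, max_le (by linarith) (min_le_left _ _)⟩
  have hu_close : ∀ x, |u x - h x| ≤ ‖h x - g x‖ := by
    intro x
    rw [Real.norm_eq_abs, abs_sub_comm (h x)]
    exact clamp_abs_sub_le (abs_le.1 (Habs n x)).1 (abs_le.1 (Habs n x)).2
  have hu_int_ν : Integrable (⇑u) ν :=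
    u.continuous.integrable_of_hasCompactSupport (HasCompactSupport.of_compactSpace _)
  have hdiff_int_ν : Integrable (fun x => |u x - h x|) ν := (hu_int_ν.sub h_int_ν).abs
  have key_est : ∫ x, |u x - h x| ∂ν ≤ ε' := by
    refine le_trans ?_ hg_approx
    exact integral_mono hdiff_int_ν (h_int_ν.sub hg_int).norm hu_close
  have est_μ : ∫ x, |u x - h x| ∂μ ≤ ε' := by
    refine le_trans ?_ key_est
    exact integral_mono_measure (Measure.le_add_left le_rfl)
      (Eventually.of_forall fun x => abs_nonneg _) hdiff_int_ν
  have est_μ₀ : ∫ x, |u x - h x| ∂μ₀ ≤ ε' := by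
    refine le_trans ?_ key_est
    exact integral_mono_measure (Measure.le_add_right le_rfl)
      (Eventually.of_forall fun x => abs_nonneg _) hdiff_int_ν
  -- integrability over the individual measures
  have hu_int_μ : Integrable (⇑u) μ :=
    u.continuous.integrable_of_hasCompactSupport (HasCompactSupport.of_compactSpace _)
  have h_int_μ : Integrable h μ := H_int n
  have hdiff_int_μ : Integrable (fun x => |u x - h x|) μ := (hu_int_μ.sub h_int_μ).abs
  have hdiff_int_μ₀ : Integrable (fun x => |u x - h x|) μ₀ := by
    have h1 : Integrable (⇑u) μ₀ :=
      u.continuous.integrable_of_hasCompactSupport (HasCompactSupport.of_compactSpace _)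
    have h2 : Integrable h μ₀ := by
      refine Integrable.mono' (integrable_const (n : ℝ)) (Hmeas n).aestronglyMeasurable ?_
      filter_upwards with x
      rw [Real.norm_eq_abs]; exact Habs n x
    exact (h1.sub h2).abs
  -- estimate on ∫ u dμ
  have hint_u : ∫ x, h x ∂μ - ε' ≤ ∫ x, u x ∂μ := by
    have h1 : |∫ x, (u x - h x) ∂μ| ≤ ∫ x, |u x - h x| ∂μ := by
      simpa [Real.norm_eq_abs] using norm_integral_le_integral_norm (fun x => u x - h x) (μ := μ)
    rw [integral_sub hu_int_μ h_int_μ] at h1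
    have := (abs_le.1 h1).1
    linarith
  -- estimate on ∫ exp u dμ₀
  have hexpu_int : Integrable (fun x => Real.exp (u x)) μ₀ :=
    (Real.continuous_exp.comp u.continuous).integrable_of_hasCompactSupport
      (HasCompactSupport.of_compactSpace _)
  have hexp_est : ∫ x, Real.exp (u x) ∂μ₀ ≤ A + Real.exp (n : ℝ) * ε' := by
    have hptw : ∀ x, Real.exp (u x) - Real.exp (h x) ≤ Real.exp (n : ℝ) * |u x - h x| := by
      intro x
      have := abs_exp_sub_exp_le (M := (n : ℝ)) (abs_le.1 (hu_abs x)).2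
        (abs_le.1 (Habs n x)).2
      have h2 := (abs_le.1 this).2
      have h3 := le_abs_self (Real.exp (u x) - Real.exp (h x))
      linarith
    have h1 : ∫ x, (Real.exp (u x) - Real.exp (h x)) ∂μ₀
        ≤ ∫ x, Real.exp (n : ℝ) * |u x - h x| ∂μ₀ :=
      integral_mono (hexpu_int.sub (expH_int n)) (hdiff_int_μ₀.const_mul _) hptw
    rw [integral_sub hexpu_int (expH_int n), integral_const_mul] at h1
    have h2 : Real.exp (n : ℝ) * ∫ x, |u x - h x| ∂μ₀ ≤ Real.exp (n : ℝ) * ε' :=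
      mul_le_mul_of_nonneg_left est_μ₀ (Real.exp_pos _).le
    linarith
  have hexpu_pos : 0 < ∫ x, Real.exp (u x) ∂μ₀ := by
    have hlb := le_integral_exp hexpu_int (M := (n : ℝ)) (fun x => (abs_le.1 (hu_abs x)).1)
    have : (0:ℝ) < Real.exp (-(n : ℝ)) * m := by positivity
    linarith
  have hlog_est : Real.log (∫ x, Real.exp (u x) ∂μ₀) ≤ Real.log A + δ / 4 := by
    have h1 : Real.log (∫ x, Real.exp (u x) ∂μ₀)
        ≤ Real.log (A + Real.exp (n : ℝ) * ε') := Real.log_le_log hexpu_pos hexp_est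
    set B : ℝ := Real.exp (n : ℝ) * ε' with hB_def
    have hB_nonneg : 0 ≤ B := mul_nonneg (Real.exp_pos _).le hε'_pos.le
    have h2 : Real.log (A + B) ≤ Real.log A + B / A := by
      have hd : Real.log ((A + B) / A) ≤ (A + B) / A - 1 :=
        Real.log_le_sub_one_of_pos (div_pos (by linarith) hA_pos)
      rw [Real.log_div (by linarith) hA_pos.ne'] at hd
      have he : (A + B) / A - 1 = B / A := by field_simp; ring
      rw [he] at hd
      linarith
    have h3 : B / A ≤ δ / 4 := by
      rw [div_le_iff₀ hA_pos]
      have hε'2 : ε' ≤ δ / 4 * Real.exp (-(2 : ℝ) * n) * m := min_le_right _ _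
      have hee : Real.exp (n : ℝ) * Real.exp (-(2 : ℝ) * n) = Real.exp (-(n : ℝ)) := by
        rw [← Real.exp_add]; ring_nf
      calc B ≤ Real.exp (n : ℝ) * (δ / 4 * Real.exp (-(2 : ℝ) * n) * m) :=
            mul_le_mul_of_nonneg_left hε'2 (Real.exp_pos _).le
        _ = δ / 4 * (Real.exp (-(n : ℝ)) * m) := by rw [← hee]; ring
        _ ≤ δ / 4 * A := mul_le_mul_of_nonneg_left hA_lb (by linarith)
    linarith
  refine ⟨u, ?_⟩
  have hε'le : ε' ≤ δ / 4 := min_le_left _ _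
  have hDle : D - δ / 4 ≤ ∫ x, h x ∂μ := hn1.le
  have : ∫ x, Real.log (f x) ∂μ = D := rfl
  linarith [hint_u, hlog_est, hlogA]

/-- Donsker–Varadhan variational formula (scaled by `1/γ`): for a probability measure `μ`
absolutely continuous with respect to a finite measure `μ₀` on a compact metric space,
`(1/γ) D(μ‖μ₀) = sup_{u ∈ C(X,ℝ)} ( -(1/γ) log ∫ e^{-γ u} dμ₀ - ∫ u dμ )`. -/
theorem donsker_varadhan_entropy
    {X : Type*} [MetricSpace X] [CompactSpace X] [MeasurableSpace X] [BorelSpace X]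
    (μ₀ : Measure X) [IsFiniteMeasure μ₀] (μ : Measure X) [IsProbabilityMeasure μ]
    (γ : ℝ) (hγ : 0 < γ)
    (hac : μ ≪ μ₀)
    (hint : Integrable (fun x => Real.log (μ.rnDeriv μ₀ x).toReal) μ) :
    (1 / γ) * ∫ x, Real.log (μ.rnDeriv μ₀ x).toReal ∂μ =
      ⨆ u : C(X, ℝ),
        (-(1 / γ) * Real.log (∫ x, Real.exp (-γ * u x) ∂μ₀) - ∫ x, u x ∂μ) := by
  set D : ℝ := ∫ x, Real.log (μ.rnDeriv μ₀ x).toReal ∂μ with hD_def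
  set F : C(X, ℝ) → ℝ :=
    fun u => -(1 / γ) * Real.log (∫ x, Real.exp (-γ * u x) ∂μ₀) - ∫ x, u x ∂μ with hF_def
  have hγ' : (0:ℝ) < 1 / γ := by positivity
  -- upper bound on each term
  have hub : ∀ u : C(X, ℝ), F u ≤ (1 / γ) * D := by
    intro u
    have hmeas : Measurable fun x => -γ * u x :=
      (measurable_const.mul u.continuous.measurable)
    have hM : ∀ x, |(-γ) * u x| ≤ γ * ‖u‖ := by
      intro x
      rw [abs_mul, abs_neg, abs_of_pos hγ]
      refine mul_le_mul_of_nonneg_left ?_ hγ.le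
      simpa [Real.norm_eq_abs] using u.norm_coe_le_norm x
    have h1 := gibbs_le μ₀ μ hac hint hmeas hM
    have h2 : ∫ x, -γ * u x ∂μ = -γ * ∫ x, u x ∂μ := integral_const_mul _ _
    rw [h2] at h1
    have h3 := mul_le_mul_of_nonneg_left h1 hγ'.le
    have h4 : (1 / γ) * (-γ * ∫ x, u x ∂μ - Real.log (∫ x, Real.exp (-γ * u x) ∂μ₀))
        = F u := by
      rw [hF_def]
      field_simp
      ring
    rw [h4] at h3
    exact h3
  have hbdd : BddAbove (Set.range F) := by
    refine ⟨(1 / γ) * D, ?_⟩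
    rintro y ⟨u, rfl⟩
    exact hub u
  refine le_antisymm ?_ (ciSup_le hub)
  refine le_of_forall_pos_le_add fun ε hε => ?_
  obtain ⟨h, hh⟩ := gibbs_sup μ₀ μ hac hint (δ := γ * ε) (by positivity)
  set u : C(X, ℝ) := (-(1 / γ)) • h with hu_def
  have hux : ∀ x, u x = -(1 / γ) * h x := fun x => rfl
  have hexp_eq : (fun x => Real.exp (-γ * u x)) = fun x => Real.exp (h x) := by
    funext x
    rw [hux]
    congr 1
    field_simp
  have hu_int : ∫ x, u x ∂μ = -(1 / γ) * ∫ x, h x ∂μ := by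
    simp only [hux]
    exact integral_const_mul _ _
  have hFu : F u = (1 / γ) * (∫ x, h x ∂μ - Real.log (∫ x, Real.exp (h x) ∂μ₀)) := by
    rw [hF_def]
    simp only [hexp_eq, hu_int]
    ring
  have hval : (1 / γ) * (D - γ * ε) ≤ F u := by
    rw [hFu]
    exact mul_le_mul_of_nonneg_left hh hγ'.le
  have hsup : F u ≤ iSup F := le_ciSup hbdd u
  have hεeq : (1 / γ) * (D - γ * ε) = (1 / γ) * D - ε := by
    field_simp
  rw [hεeq] at hval
  calc (1 / γ) * D ≤ F u + ε := by linarith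
    _ ≤ iSup F + ε := add_le_add_left hsup ε
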